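/- Let Ā ∈ ℝ^{n×(d+1)}, let U ∈ ℝ^{n×k} be an (α,β,p)-conditioned matrix with Ā = UR for some R ∈ ℝ^{k×(d+1)}, and let C = {x ∈ ℝ^{d+1} : x_{d+1} = −1}. For i ∈ {1,…,n} let f_i(x) = |Ā_i x|^p, let λ_i = ‖U_i‖_p^p, define the sensitivity s_i = n · sup { f_i(x)/Σ_{j=1}^n f_j(x) : x ∈ C, Āx ≠ 0 }, and m(f_i) = ⌊s_i⌋ + 1. Then for every i, m(f_i) ≤ nβ^p λ_i + 1, and the total sensitivity satisfies M(F) = Σ_{i=1}^n m(f_i) ≤ n((αβ)^p + 1). -/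

import Mathlib

open Matrix Finset

/-- The entrywise `ℓ_p` norm of a vector: `‖v‖_p = (∑ i, |v i|^p)^(1/p)`. -/
noncomputable def vecLpNorm (p : ℝ) {m : ℕ} (v : Fin m → ℝ) : ℝ :=
  (∑ i, |v i| ^ p) ^ (1 / p)

/-- The norm dual to the `ℓ_p` norm, i.e. the `ℓ_q` norm with `1/p + 1/q = 1`
(the `ℓ_∞` norm when `p = 1`). -/
noncomputable def vecDualNorm (p : ℝ) {m : ℕ} (v : Fin m → ℝ) : ℝ :=
  if p = 1 then ⨆ i, |v i| else vecLpNorm (p / (p - 1)) v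

/-- The entrywise `ℓ_p` norm of a matrix: `|M|_p = (∑ i j, |M i j|^p)^(1/p)`. -/
noncomputable def matEntryLpNorm (p : ℝ) {m k : ℕ} (M : Matrix (Fin m) (Fin k) ℝ) : ℝ :=
  (∑ i, ∑ j, |M i j| ^ p) ^ (1 / p)

/-- `U` is `(α, β, p)`-conditioned if `|U|_p ≤ α` and `‖x‖_q ≤ β ‖U x‖_p` for all `x`,
where `q` is the conjugate exponent of `p` (the constant `β` being nonnegative). -/
def IsConditioned (p : ℝ) {m k : ℕ} (α β : ℝ) (U : Matrix (Fin m) (Fin k) ℝ) : Prop :=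
  0 ≤ β ∧ matEntryLpNorm p U ≤ α ∧
    ∀ x : Fin k → ℝ, vecDualNorm p x ≤ β * vecLpNorm p (U *ᵥ x)

/-- Hölder's inequality in the form needed: `|⟨v, y⟩| ≤ ‖v‖_p ‖y‖_q`. -/
lemma abs_dotProduct_le_lp_dual (p : ℝ) (hp : 1 ≤ p) {k : ℕ} (v y : Fin k → ℝ) :
    |∑ j, v j * y j| ≤ (∑ j, |v j| ^ p) ^ (1 / p) * vecDualNorm p y := by
  rcases eq_or_lt_of_le hp with h1 | h1
  · -- p = 1
    subst h1
    simp only [vecDualNorm, if_pos rfl]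
    have hM : ∀ j : Fin k, |y j| ≤ ⨆ i, |y i| := by
      intro j
      exact le_ciSup (f := fun i => |y i|) (Set.Finite.bddAbove (Set.finite_range _)) j
    calc |∑ j, v j * y j| ≤ ∑ j, |v j * y j| := Finset.abs_sum_le_sum_abs _ _
      _ = ∑ j, |v j| * |y j| := by simp [abs_mul]
      _ ≤ ∑ j, |v j| * (⨆ i, |y i|) := by
          refine Finset.sum_le_sum fun j _ => ?_
          exact mul_le_mul_of_nonneg_left (hM j) (abs_nonneg _)
      _ = (∑ j, |v j|) * (⨆ i, |y i|) := by rw [← Finset.sum_mul]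
      _ = (∑ j, |v j| ^ (1:ℝ)) ^ (1 / (1:ℝ)) * (⨆ i, |y i|) := by
          simp
  · -- p > 1
    have hpq : p.HolderConjugate (p / (p - 1)) := Real.HolderConjugate.conjExponent h1
    have hne : p ≠ 1 := ne_of_gt h1
    simp only [vecDualNorm, if_neg hne, vecLpNorm]
    calc |∑ j, v j * y j| ≤ ∑ j, |v j * y j| := Finset.abs_sum_le_sum_abs _ _
      _ = ∑ j, |v j| * |y j| := by simp [abs_mul]
      _ ≤ (∑ j, |v j| ^ p) ^ (1 / p) * (∑ j, |y j| ^ (p / (p-1))) ^ (1 / (p / (p-1))) := by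
          have h := Real.inner_le_Lp_mul_Lq Finset.univ (fun j => |v j|) (fun j => |y j|) hpq
          simpa [abs_abs] using h

theorem sensitivities_bounded_by_leverage_scores
    (n d k : ℕ) (p : ℝ) (hp : 1 ≤ p)
    (Abar : Matrix (Fin n) (Fin (d+1)) ℝ)
    (U : Matrix (Fin n) (Fin k) ℝ) (α β : ℝ) (hcond : IsConditioned p α β U)
    (R : Matrix (Fin k) (Fin (d+1)) ℝ) (hfact : Abar = U * R)
    (C : Set (Fin (d+1) → ℝ)) (hC : C = {x | x (Fin.last d) = -1})
    (f : Fin n → (Fin (d+1) → ℝ) → ℝ) (hf : ∀ i x, f i x = |Abar i ⬝ᵥ x| ^ p)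
    (lam : Fin n → ℝ) (hlam : ∀ i, lam i = ∑ j, |U i j| ^ p)
    (s : Fin n → ℝ)
    (hs : ∀ i, s i = n * sSup {v | ∃ x ∈ C, Abar *ᵥ x ≠ 0 ∧ v = f i x / ∑ j, f j x}) :
    (∀ i, (⌊s i⌋ : ℝ) + 1 ≤ n * β ^ p * lam i + 1) ∧
    (∑ i, ((⌊s i⌋ : ℝ) + 1)) ≤ n * ((α * β) ^ p + 1) := by
  obtain ⟨hβ, hα, hcnd⟩ := hcond
  have hp0 : (0:ℝ) < p := lt_of_lt_of_le one_pos hp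
  have hp0' : p ≠ 0 := ne_of_gt hp0
  have hlamnn : ∀ i, 0 ≤ lam i := by
    intro i; rw [hlam]
    exact Finset.sum_nonneg fun j _ => Real.rpow_nonneg (abs_nonneg _) p
  have hβp : (0:ℝ) ≤ β ^ p := Real.rpow_nonneg hβ p
  -- main bound on sensitivities
  have key : ∀ i, s i ≤ n * β ^ p * lam i := by
    intro i
    rw [hs]
    rw [show (n:ℝ) * β ^ p * lam i = n * (β ^ p * lam i) by ring]
    refine mul_le_mul_of_nonneg_left ?_ (Nat.cast_nonneg n)
    refine Real.sSup_le ?_ (mul_nonneg hβp (hlamnn i))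
    rintro v ⟨x, -, hx0, rfl⟩
    -- let y = R x
    set y : Fin k → ℝ := R *ᵥ x with hy
    have hAx : ∀ j, Abar j ⬝ᵥ x = (U *ᵥ y) j := by
      intro j
      have : Abar *ᵥ x = U *ᵥ y := by rw [hfact, hy, mulVec_mulVec]
      calc Abar j ⬝ᵥ x = (Abar *ᵥ x) j := rfl
        _ = (U *ᵥ y) j := by rw [this]
    -- sum of f j x is positive
    have hfnn : ∀ j, 0 ≤ f j x := fun j => by
      rw [hf]; exact Real.rpow_nonneg (abs_nonneg _) p
    have hsumpos : 0 < ∑ j, f j x := by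
      obtain ⟨j, hj⟩ := Function.ne_iff.1 hx0
      refine Finset.sum_pos' (fun j _ => hfnn j) ⟨j, Finset.mem_univ j, ?_⟩
      rw [hf]
      exact Real.rpow_pos_of_pos (abs_pos.2 hj) p
    -- f i x ≤ β^p * lam i * ∑ f j x
    have hbound : f i x ≤ β ^ p * lam i * ∑ j, f j x := by
      have h1 : |U i ⬝ᵥ y| ≤ (lam i) ^ (1/p) * (β * vecLpNorm p (U *ᵥ y)) := by
        have h := abs_dotProduct_le_lp_dual p hp (fun j => U i j) y
        have h' : |U i ⬝ᵥ y| ≤ (lam i) ^ (1/p) * vecDualNorm p y := by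
          rw [hlam]; simpa [dotProduct] using h
        exact le_trans h' (mul_le_mul_of_nonneg_left (hcnd y) (Real.rpow_nonneg (hlamnn i) _))
      have h2 : f i x = |U i ⬝ᵥ y| ^ p := by
        rw [hf]
        congr 1
        exact congrArg abs (hAx i)
      have hLp : (vecLpNorm p (U *ᵥ y)) ^ p = ∑ j, f j x := by
        rw [vecLpNorm,
          ← Real.rpow_mul (Finset.sum_nonneg fun j _ => Real.rpow_nonneg (abs_nonneg _) p),
          one_div_mul_cancel hp0', Real.rpow_one]
        refine Finset.sum_congr rfl fun j _ => ?_
        rw [hf, hAx]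
      have hLpnn : 0 ≤ vecLpNorm p (U *ᵥ y) :=
        Real.rpow_nonneg (Finset.sum_nonneg fun j _ => Real.rpow_nonneg (abs_nonneg _) p) _
      calc f i x = |U i ⬝ᵥ y| ^ p := h2
        _ ≤ ((lam i) ^ (1/p) * (β * vecLpNorm p (U *ᵥ y))) ^ p :=
            Real.rpow_le_rpow (abs_nonneg _) h1 (le_of_lt hp0)
        _ = ((lam i) ^ (1/p)) ^ p * (β ^ p * (vecLpNorm p (U *ᵥ y)) ^ p) := by
            rw [Real.mul_rpow (Real.rpow_nonneg (hlamnn i) _) (mul_nonneg hβ hLpnn),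
              Real.mul_rpow hβ hLpnn]
        _ = lam i * (β ^ p * ∑ j, f j x) := by
            rw [← Real.rpow_mul (hlamnn i), one_div_mul_cancel hp0', Real.rpow_one, hLp]
        _ = β ^ p * lam i * ∑ j, f j x := by ring
    rw [div_le_iff₀ hsumpos]
    exact hbound
  have part1 : ∀ i, (⌊s i⌋ : ℝ) + 1 ≤ n * β ^ p * lam i + 1 := by
    intro i
    have := le_trans (Int.floor_le (s i)) (key i)
    linarith
  refine ⟨part1, ?_⟩
  -- sum of lams is at most α^p
  have hα0 : 0 ≤ α := le_trans (Real.rpow_nonneg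
    (Finset.sum_nonneg fun i _ => Finset.sum_nonneg fun j _ =>
      Real.rpow_nonneg (abs_nonneg _) p) _) hα
  have hsumlam : ∑ i, lam i ≤ α ^ p := by
    have hS : (0:ℝ) ≤ ∑ i, ∑ j, |U i j| ^ p :=
      Finset.sum_nonneg fun i _ => Finset.sum_nonneg fun j _ =>
        Real.rpow_nonneg (abs_nonneg _) p
    have h1 : (matEntryLpNorm p U) ^ p ≤ α ^ p :=
      Real.rpow_le_rpow (Real.rpow_nonneg hS _) hα (le_of_lt hp0)
    have h2 : (matEntryLpNorm p U) ^ p = ∑ i, ∑ j, |U i j| ^ p := by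
      rw [matEntryLpNorm, ← Real.rpow_mul hS, one_div_mul_cancel hp0', Real.rpow_one]
    calc ∑ i, lam i = ∑ i, ∑ j, |U i j| ^ p := Finset.sum_congr rfl fun i _ => hlam i
      _ = (matEntryLpNorm p U) ^ p := h2.symm
      _ ≤ α ^ p := h1
  calc ∑ i, ((⌊s i⌋ : ℝ) + 1) ≤ ∑ i : Fin n, ((n:ℝ) * β ^ p * lam i + 1) :=
        Finset.sum_le_sum fun i _ => part1 i
    _ = (n:ℝ) * β ^ p * (∑ i, lam i) + n := by
        rw [Finset.sum_add_distrib, ← Finset.mul_sum]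
        simp
    _ ≤ (n:ℝ) * β ^ p * α ^ p + n := by
        refine add_le_add_left (mul_le_mul_of_nonneg_left hsumlam ?_) _
        exact mul_nonneg (Nat.cast_nonneg n) hβp
    _ = n * ((α * β) ^ p + 1) := by
        rw [Real.mul_rpow hα0 hβ]; ring
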